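/- In a separated polarity (Z₁, Z₂, ⊥) (where u ⪯ w iff {u}′ ⊆ {w}′ is a partial order), let F : 𝒫(Z₁) → 𝒫(Z₁) be completely additive with residual G (F(U) ⊆ V iff U ⊆ G(V)), and suppose that the closure F̄ of the restriction of F to stable sets is completely join-preserving on stable sets. Then the residual Ḡ of F̄ on stable sets can be computed pointwise via principal closed elements: for stable sets P and Q, Ḡ(Q) = {u ∈ Z₁ | F̄(Γu) ⊆ Q}, where Γu = {u}″. -/
import Mathlib


def prime1 {Z₁ Z₂ : Type*} (perp : Z₁ → Z₂ → Prop) (U : Set Z₁) : Set Z₂ :=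
  {y | ∀ x ∈ U, perp x y}

def prime2 {Z₁ Z₂ : Type*} (perp : Z₁ → Z₂ → Prop) (V : Set Z₂) : Set Z₁ :=
  {x | ∀ y ∈ V, perp x y}

def gcl {Z₁ Z₂ : Type*} (perp : Z₁ → Z₂ → Prop) (U : Set Z₁) : Set Z₁ :=
  prime2 perp (prime1 perp U)

lemma subset_gcl' {Z₁ Z₂ : Type*} (perp : Z₁ → Z₂ → Prop) (U : Set Z₁) :
    U ⊆ gcl perp U := fun x hx y hy => hy x hx

lemma gcl_mono' {Z₁ Z₂ : Type*} (perp : Z₁ → Z₂ → Prop) {U V : Set Z₁} (h : U ⊆ V) :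
    gcl perp U ⊆ gcl perp V :=
  fun x hx y hy => hx y (fun z hz => hy z (h hz))

lemma prime1_gcl' {Z₁ Z₂ : Type*} (perp : Z₁ → Z₂ → Prop) (U : Set Z₁) :
    prime1 perp (gcl perp U) = prime1 perp U := by
  apply Set.Subset.antisymm
  · exact fun y hy x hx => hy x (subset_gcl' perp U hx)
  · exact fun y hy x hx => hx y hy

lemma gcl_idem' {Z₁ Z₂ : Type*} (perp : Z₁ → Z₂ → Prop) (U : Set Z₁) :
    gcl perp (gcl perp U) = gcl perp U := by
  exact congrArg (prime2 perp) (prime1_gcl' perp U)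

theorem stmt16 {Z₁ Z₂ : Type*} (perp : Z₁ → Z₂ → Prop)
    (F : Set Z₁ → Set Z₁)
    -- separation: ⪯ is a partial order, i.e. antisymmetric
    (hsep : ∀ u w : Z₁, prime1 perp {u} = prime1 perp {w} → u = w)
    -- complete additivity of F
    (hAdd : ∀ S : Set (Set Z₁), F (⋃₀ S) = ⋃₀ (F '' S))
    -- the closure F̄ of the restriction of F to stable sets preserves joins
    (hJoin : ∀ S : Set (Set Z₁), (∀ A ∈ S, gcl perp A = A) →
      gcl perp (F (gcl perp (⋃₀ S))) = gcl perp (⋃₀ {B | ∃ A ∈ S, B = F A})) :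
    ∀ Q : Set Z₁, gcl perp Q = Q →
      -- the claimed residual is a stable set ...
      gcl perp {u : Z₁ | gcl perp (F (gcl perp {u})) ⊆ Q}
        = {u : Z₁ | gcl perp (F (gcl perp {u})) ⊆ Q} ∧
      -- ... and it is the right adjoint of F̄ on stable sets
      (∀ A : Set Z₁, gcl perp A = A →
        (gcl perp (F A) ⊆ Q ↔ A ⊆ {u : Z₁ | gcl perp (F (gcl perp {u})) ⊆ Q})) := by
  -- F is monotone
  have Fmono : ∀ {U V : Set Z₁}, U ⊆ V → F U ⊆ F V := by
    intro U V h
    have h1 : F (⋃₀ {U, V}) = ⋃₀ (F '' ({U, V} : Set (Set Z₁))) := hAdd _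
    rw [Set.sUnion_pair, Set.image_pair, Set.sUnion_pair,
      Set.union_eq_self_of_subset_left h] at h1
    rw [h1]; exact Set.subset_union_left
  intro Q hQ
  set G' : Set Z₁ := {u : Z₁ | gcl perp (F (gcl perp {u})) ⊆ Q} with hG'
  -- key: for any A, with S = image of gcl of singletons over A
  have key : ∀ A : Set Z₁,
      gcl perp (F (gcl perp (⋃ u ∈ A, gcl perp {u})))
        = gcl perp (⋃ u ∈ A, F (gcl perp {u})) := by
    intro A
    have h := hJoin ((fun u => gcl perp {u}) '' A) (by
      rintro B ⟨u, _, rfl⟩; exact gcl_idem' perp _)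
    have e1 : ⋃₀ ((fun u => gcl perp {u}) '' A) = ⋃ u ∈ A, gcl perp {u} := by
      rw [Set.sUnion_image]
    have e2 : (⋃₀ {B | ∃ C ∈ (fun u => gcl perp {u}) '' A, B = F C})
        = ⋃ u ∈ A, F (gcl perp {u}) := by
      ext x
      simp only [Set.mem_sUnion, Set.mem_setOf_eq, Set.mem_image, Set.mem_iUnion]
      constructor
      · rintro ⟨B, ⟨C, ⟨u, hu, rfl⟩, rfl⟩, hx⟩; exact ⟨u, hu, hx⟩
      · rintro ⟨u, hu, hx⟩; exact ⟨F (gcl perp {u}), ⟨_, ⟨u, hu, rfl⟩, rfl⟩, hx⟩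
    rw [e1, e2] at h
    exact h
  -- bound : ⋃ u∈A, gcl {u} between A and gcl A
  have lb : ∀ A : Set Z₁, A ⊆ ⋃ u ∈ A, gcl perp {u} := by
    intro A x hx
    exact Set.mem_biUnion hx (subset_gcl' perp {x} rfl)
  have ub : ∀ A : Set Z₁, (⋃ u ∈ A, gcl perp {u}) ⊆ gcl perp A := by
    intro A x hx
    obtain ⟨u, hu, hxu⟩ := Set.mem_iUnion₂.mp hx
    exact gcl_mono' perp (Set.singleton_subset_iff.mpr hu) hxu
  have unionGcl : ∀ A : Set Z₁, gcl perp (⋃ u ∈ A, gcl perp {u}) = gcl perp A := by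
    intro A
    apply Set.Subset.antisymm
    · have := gcl_mono' perp (ub A)
      rwa [gcl_idem'] at this
    · exact gcl_mono' perp (lb A)
  -- each F(gcl{u}) ⊆ Q for u ∈ G'
  have memsub : ∀ A : Set Z₁, A ⊆ G' → (⋃ u ∈ A, F (gcl perp {u})) ⊆ Q := by
    intro A hA x hx
    obtain ⟨u, hu, hxu⟩ := Set.mem_iUnion₂.mp hx
    exact hA hu (subset_gcl' perp _ hxu)
  have mainQ : ∀ A : Set Z₁, A ⊆ G' → gcl perp (F (gcl perp A)) ⊆ Q := by
    intro A hA
    have h := key A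
    rw [unionGcl A] at h
    have : gcl perp (F (gcl perp A)) ⊆ gcl perp Q := by
      rw [h]; exact gcl_mono' perp (memsub A hA)
    rwa [hQ] at this
  constructor
  · -- stability of G'
    apply Set.Subset.antisymm _ (subset_gcl' perp G')
    intro u hu
    have h1 : gcl perp {u} ⊆ gcl perp G' := by
      have := gcl_mono' perp (Set.singleton_subset_iff.mpr hu)
      rwa [gcl_idem'] at this
    have : gcl perp (F (gcl perp {u})) ⊆ gcl perp (F (gcl perp G')) :=
      gcl_mono' perp (Fmono h1)
    exact this.trans (mainQ G' (fun _ h => h))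
  · intro A hA
    constructor
    · intro h u hu
      have h1 : gcl perp {u} ⊆ A := by
        have := gcl_mono' perp (Set.singleton_subset_iff.mpr hu)
        rwa [hA] at this
      exact (gcl_mono' perp (Fmono h1)).trans h
    · intro h
      have := mainQ A h
      rwa [hA] at this
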